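/- Under the hypotheses of the previous context, the 1-Wasserstein distance between the discrete probability measures μⁿ = ∑_i μ_i δ_{x_i} and μⁿ⁺¹ = ∑_i μ_i' δ_{x_i} satisfies d_W(μⁿ, μⁿ⁺¹) ≤ Δx. -/

import Mathlib

lemma summable_bdd_mul (μ : ℤ → ℝ) (hμ : Summable μ) (hμpos : ∀ i, 0 ≤ μ i)
    (c : ℤ → ℝ) (K : ℝ) (hc : ∀ i, |c i| ≤ K) :
    Summable (fun i => c i * μ i) := by
  apply Summable.of_norm_bounded (g := fun i => K * μ i) (hμ.mul_left K)
  intro i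
  rw [Real.norm_eq_abs, abs_mul, abs_of_nonneg (hμpos i)]
  exact mul_le_mul_of_nonneg_right (hc i) (hμpos i)

theorem stmt_4 (μ μ' V : ℤ → ℝ) (C₁ Δt Δx : ℝ)
    (hC₁ : 0 < C₁) (hΔt : 0 < Δt) (hΔx : 0 < Δx)
    (hμpos : ∀ i, 0 ≤ μ i)
    (hsum : HasSum μ 1)
    (hV : ∀ i, |V i| ≤ C₁)
    (hCFL : Δt / Δx ≤ 1 / C₁)
    (hupd : ∀ i, μ' i = (μ (i-1) + μ (i+1)) / 2
      - (Δt / (2*Δx)) * (V (i+1) * μ (i+1) - V (i-1) * μ (i-1))) :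
    sSup {r : ℝ | ∃ ψ : ℝ → ℝ,
      (∀ x y, |ψ x - ψ y| ≤ |x - y|) ∧ (∃ B, ∀ x, |ψ x| ≤ B) ∧
      r = ∑' i : ℤ, ψ ((i : ℝ) * Δx) * (μ' i - μ i)} ≤ Δx := by
  apply Real.sSup_le _ hΔx.le
  rintro r ⟨ψ, hLip, ⟨B, hB⟩, rfl⟩
  set L : ℝ := Δt / (2*Δx) with hLdef
  have hL0 : 0 ≤ L := by positivity
  have hB0 : 0 ≤ B := (abs_nonneg _).trans (hB 0)
  have hLC : L * C₁ ≤ 1/2 := by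
    rw [div_le_div_iff₀ hΔx hC₁] at hCFL
    rw [hLdef, div_mul_eq_mul_div, div_le_div_iff₀ (by positivity) (by norm_num)]
    nlinarith
  have hLV : ∀ i, |L * V i| ≤ 1/2 := fun i => by
    rw [abs_mul, abs_of_nonneg hL0]
    calc L * |V i| ≤ L * C₁ := mul_le_mul_of_nonneg_left (hV i) hL0
      _ ≤ 1/2 := hLC
  have hα : ∀ i, 0 ≤ 1/2 + L * V i := fun i => by
    have := abs_le.1 (hLV i); linarith [this.1]
  have hβ : ∀ i, 0 ≤ 1/2 - L * V i := fun i => by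
    have := abs_le.1 (hLV i); linarith [this.2]
  have hα1 : ∀ i, 1/2 + L * V i ≤ 1 := fun i => by
    have := abs_le.1 (hLV i); linarith [this.2]
  have hβ1 : ∀ i, 1/2 - L * V i ≤ 1 := fun i => by
    have := abs_le.1 (hLV i); linarith [this.1]
  have hμs : Summable μ := hsum.summable
  -- pieces
  set F1 : ℤ → ℝ := fun i => ψ ((i : ℝ) * Δx) * ((1/2 + L * V (i-1)) * μ (i-1)) with hF1
  set F2 : ℤ → ℝ := fun i => ψ ((i : ℝ) * Δx) * ((1/2 - L * V (i+1)) * μ (i+1)) with hF2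
  set F3 : ℤ → ℝ := fun i => ψ ((i : ℝ) * Δx) * μ i with hF3
  set G1 : ℤ → ℝ := fun j => ψ (((j+1 : ℤ) : ℝ) * Δx) * ((1/2 + L * V j) * μ j) with hG1
  set G2 : ℤ → ℝ := fun j => ψ (((j-1 : ℤ) : ℝ) * Δx) * ((1/2 - L * V j) * μ j) with hG2
  have hG1s : Summable G1 := by
    have : G1 = fun j => (ψ (((j+1 : ℤ) : ℝ) * Δx) * (1/2 + L * V j)) * μ j := by
      funext j; rw [hG1]; ring
    rw [this]
    apply summable_bdd_mul μ hμs hμpos _ B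
    intro j
    rw [abs_mul]
    calc |ψ (((j+1 : ℤ) : ℝ) * Δx)| * |1/2 + L * V j| ≤ B * 1 := by
          apply mul_le_mul (hB _) _ (abs_nonneg _) hB0
          rw [abs_of_nonneg (hα j)]; exact hα1 j
      _ = B := mul_one B
  have hG2s : Summable G2 := by
    have : G2 = fun j => (ψ (((j-1 : ℤ) : ℝ) * Δx) * (1/2 - L * V j)) * μ j := by
      funext j; rw [hG2]; ring
    rw [this]
    apply summable_bdd_mul μ hμs hμpos _ B
    intro j
    rw [abs_mul]
    calc |ψ (((j-1 : ℤ) : ℝ) * Δx)| * |1/2 - L * V j| ≤ B * 1 := by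
          apply mul_le_mul (hB _) _ (abs_nonneg _) hB0
          rw [abs_of_nonneg (hβ j)]; exact hβ1 j
      _ = B := mul_one B
  have hF3s : Summable F3 := summable_bdd_mul μ hμs hμpos _ B (fun i => hB _)
  have h1 : HasSum F1 (∑' j, G1 j) := by
    rw [← (Equiv.addRight (1:ℤ)).hasSum_iff]
    convert hG1s.hasSum using 1
    funext j
    simp only [Function.comp, Equiv.coe_addRight, hF1, hG1, add_sub_cancel_right]
  have h2 : HasSum F2 (∑' j, G2 j) := by
    rw [← (Equiv.subRight (1:ℤ)).hasSum_iff]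
    convert hG2s.hasSum using 1
    funext j
    simp only [Function.comp, Equiv.subRight_apply, hF2, hG2, sub_add_cancel]
  have h3 : HasSum F3 (∑' j, F3 j) := hF3s.hasSum
  have htot : HasSum (fun i : ℤ => ψ ((i : ℝ) * Δx) * (μ' i - μ i))
      ((∑' j, G1 j) + (∑' j, G2 j) - ∑' j, F3 j) := by
    have H := (h1.add h2).sub h3
    convert H using 1
    · rfl
    funext i
    simp only [Pi.sub_apply, Pi.add_apply, hF1, hF2, hF3]
    rw [hupd i]
    ring
  rw [htot.tsum_eq]
  have hrw : (∑' j, G1 j) + (∑' j, G2 j) - ∑' j, F3 j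
      = ∑' j, (G1 j + G2 j - F3 j) := by
    rw [← Summable.tsum_add hG1s hG2s, ← Summable.tsum_sub (hG1s.add hG2s) hF3s]
  rw [hrw]
  have hpt : ∀ j, G1 j + G2 j - F3 j ≤ Δx * μ j := by
    intro j
    have e1 : ψ (((j+1 : ℤ) : ℝ) * Δx) - ψ ((j : ℝ) * Δx) ≤ Δx := by
      refine (le_abs_self _).trans ((hLip _ _).trans ?_)
      have : ((j+1 : ℤ) : ℝ) * Δx - (j : ℝ) * Δx = Δx := by push_cast; ring
      rw [this, abs_of_nonneg hΔx.le]
    have e2 : ψ (((j-1 : ℤ) : ℝ) * Δx) - ψ ((j : ℝ) * Δx) ≤ Δx := by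
      refine (le_abs_self _).trans ((hLip _ _).trans ?_)
      have : ((j-1 : ℤ) : ℝ) * Δx - (j : ℝ) * Δx = -Δx := by push_cast; ring
      rw [this, abs_neg, abs_of_nonneg hΔx.le]
    have key : G1 j + G2 j - F3 j
        = (ψ (((j+1 : ℤ) : ℝ) * Δx) - ψ ((j : ℝ) * Δx)) * ((1/2 + L * V j) * μ j)
        + (ψ (((j-1 : ℤ) : ℝ) * Δx) - ψ ((j : ℝ) * Δx)) * ((1/2 - L * V j) * μ j) := by
      simp only [hG1, hG2, hF3]; ring
    rw [key]
    have n1 : 0 ≤ (1/2 + L * V j) * μ j := mul_nonneg (hα j) (hμpos j)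
    have n2 : 0 ≤ (1/2 - L * V j) * μ j := mul_nonneg (hβ j) (hμpos j)
    have b1 := mul_le_mul_of_nonneg_right e1 n1
    have b2 := mul_le_mul_of_nonneg_right e2 n2
    nlinarith
  calc ∑' j, (G1 j + G2 j - F3 j) ≤ ∑' j, Δx * μ j :=
        Summable.tsum_le_tsum hpt ((hG1s.add hG2s).sub hF3s) (hμs.mul_left Δx)
    _ = Δx := by rw [(hsum.mul_left Δx).tsum_eq, mul_one]
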